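/- Let 𝔛 be a discrete (finite or countable) set, G an irreducible positive recurrent generator matrix on 𝔛 with stationary distribution μ, and let ν = Σ_{j≥1} P_j δ_{T_j} be the Markovian stick-breaking measure built from P ∼ GEM(θ) and the stationary Markov chain T with kernel Q = I + G/θ, independent of P. For n ≥ 1, let J₁,…,Jₙ be positive-integer-valued random variables on the same probability space such that P(J₁ = j₁, …, Jₙ = jₙ | P, T) = ∏_{i=1}^n P_{j_i} almost surely for all (j₁,…,jₙ), and set Y_i = T_{J_i} for 1 ≤ i ≤ n. Then almost surely, for every y^n = (y₁,…,yₙ) ∈ 𝔛^n, P(Y₁ = y₁, …, Yₙ = yₙ | σ(ν, T₁)) = ∏_{i=1}^n ν({y_i}); that is, conditionally on (ν, T₁), the variables Y₁,…,Yₙ are i.i.d. with common distribution ν. -/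

import Mathlib

open MeasureTheory ProbabilityTheory Filter

set_option maxHeartbeats 1000000

section aux1
variable {Ω' : Type*} {m' : MeasurableSpace Ω'}

lemma measurableSet_summable' (f : ℕ → Ω' → ℝ) (hf : ∀ j, Measurable (f j)) :
    MeasurableSet {ω | Summable (fun j => f j ω)} := by
  have hiff : ∀ ω, Summable (fun j => f j ω) ↔
      ∀ k : ℕ, ∃ s : Finset ℕ, ∀ t : Finset ℕ, Disjoint t s →
        ‖∑ i ∈ t, f i ω‖ < 1 / (k + 1) := by
    intro ω
    constructor
    · intro h k
      exact summable_iff_vanishing_norm.mp h _ (by positivity)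
    · intro h
      rw [summable_iff_vanishing_norm]
      intro ε hε
      obtain ⟨k, hk⟩ := exists_nat_one_div_lt hε
      obtain ⟨s, hs⟩ := h k
      exact ⟨s, fun t ht => (hs t ht).trans hk⟩
  have hset : {ω | Summable (fun j => f j ω)} =
      ⋂ k : ℕ, ⋃ s : Finset ℕ, ⋂ t : Finset ℕ, ⋂ _ : Disjoint t s,
        {ω | ‖∑ i ∈ t, f i ω‖ < 1 / (k + 1)} := by
    ext ω
    simp only [Set.mem_setOf_eq, Set.mem_iInter, Set.mem_iUnion, hiff ω]
  rw [hset]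
  refine MeasurableSet.iInter fun k => MeasurableSet.iUnion fun s =>
    MeasurableSet.iInter fun t => MeasurableSet.iInter fun _ => ?_
  have hm : Measurable fun ω => ‖∑ i ∈ t, f i ω‖ :=
    (Finset.measurable_sum t fun i _ => hf i).norm
  exact measurableSet_lt hm measurable_const

lemma measurable_tsum_real (f : ℕ → Ω' → ℝ) (hf : ∀ j, Measurable (f j)) :
    Measurable fun ω => ∑' j, f j ω := by
  have hS := measurableSet_summable' f hf
  set S := {ω | Summable fun j => f j ω} with hSdef
  have hv : ∀ N : ℕ, Measurable (S.indicator (fun ω => ∑ j ∈ Finset.range N, f j ω)) :=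
    fun N => (Finset.measurable_sum _ fun j _ => hf j).indicator hS
  refine measurable_of_tendsto_metrizable hv (tendsto_pi_nhds.mpr fun ω => ?_)
  by_cases hω : ω ∈ S
  · have h1 : Tendsto (fun N => ∑ j ∈ Finset.range N, f j ω) atTop (nhds (∑' j, f j ω)) :=
      hω.hasSum.tendsto_sum_nat
    simpa only [Set.indicator_of_mem hω] using h1
  · have h0 : ∑' j, f j ω = 0 := tsum_eq_zero_of_not_summable hω
    rw [h0]
    simp only [Set.indicator_of_notMem hω]
    exact tendsto_const_nhds

lemma hasSum_pi_prod {n : ℕ} (a : Fin n → ℕ → ℝ) (s : Fin n → ℝ)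
    (ha : ∀ i, HasSum (a i) (s i)) (h0 : ∀ i j, 0 ≤ a i j) :
    HasSum (fun jv : Fin n → ℕ => ∏ i, a i (jv i)) (∏ i, s i) := by
  induction n with
  | zero =>
      simp only [Finset.univ_eq_empty, Finset.prod_empty]
      exact hasSum_single (default : Fin 0 → ℕ)
        (fun b hb => absurd (Subsingleton.elim b default) hb)
  | succ n ih =>
      have h1 : HasSum (fun jv : Fin n → ℕ => ∏ i : Fin n, a i.succ (jv i)) (∏ i : Fin n, s i.succ) :=
        ih (fun i => a i.succ) (fun i => s i.succ) (fun i => ha i.succ) (fun (i : Fin n) (j : ℕ) => h0 i.succ j)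
      have hsummul : Summable fun p : ℕ × (Fin n → ℕ) =>
          a 0 p.1 * ∏ i : Fin n, a i.succ (p.2 i) :=
by
        apply Summable.mul_of_nonneg (ha 0).summable h1.summable
        · exact Pi.le_def.mpr fun j => h0 0 j
        · exact Pi.le_def.mpr fun jv => Finset.prod_nonneg fun (i : Fin n) _ => h0 i.succ (jv i)
      have h2 : HasSum (fun p : ℕ × (Fin n → ℕ) => a 0 p.1 * ∏ i : Fin n, a i.succ (p.2 i))
          (s 0 * ∏ i : Fin n, s i.succ) :=
        HasSum.mul (f := a 0) (g := fun jv : Fin n → ℕ => ∏ i : Fin n, a i.succ (jv i))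
          (ha 0) h1 hsummul
      have he := (Fin.consEquiv (fun _ => ℕ)).symm.hasSum_iff
        (f := fun p : ℕ × (Fin n → ℕ) => a 0 p.1 * ∏ i : Fin n, a i.succ (p.2 i))
        (a := s 0 * ∏ i : Fin n, s i.succ)
      rw [Fin.prod_univ_succ]
      have h3 := he.mpr h2
      convert h3 using 1
      funext jv
      simp [Fin.consEquiv, Fin.prod_univ_succ, Fin.tail]

end aux1

noncomputable section

/-- The Beta(1,θ) law on ℝ: density θ(1-x)^(θ-1) on [0,1]. -/
def beta1 (θ : ℝ) : Measure ℝ :=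
  (volume.restrict (Set.Icc (0:ℝ) 1)).withDensity fun x => ENNReal.ofReal (θ * (1-x)^(θ-1))

/-- Stick lengths of a residual allocation model: `stick X j` is `P_{j+1}`. -/
def stick {Ω : Type*} (X : ℕ → Ω → ℝ) (j : ℕ) (ω : Ω) : ℝ :=
  X j ω * ∏ i ∈ Finset.range j, (1 - X i ω)

/-- The random measure ν(A) = Σ_j P_j 1{T_j ∈ A}. -/
def nuSB {Ω 𝔛 : Type*} (X : ℕ → Ω → ℝ) (T : ℕ → Ω → 𝔛) (A : Set 𝔛) (ω : Ω) : ℝ :=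
  ∑' j, stick X j ω * A.indicator (fun _ => (1:ℝ)) (T j ω)

/-- Conditional expectation given an event: E[Z | E] = E[Z 1_E]/P(E). -/
def cexp {Ω : Type*} [MeasurableSpace Ω] (Pr : Measure Ω) (Z : Ω → ℝ) (E : Set Ω) : ℝ :=
  (∫ ω in E, Z ω ∂Pr) / (Pr E).toReal

end

lemma my_measurable_pi {α δ : Type*} {π : δ → Type*} {m : MeasurableSpace α}
    [∀ a, MeasurableSpace (π a)] (f : α → ∀ a, π a) (hf : ∀ a, Measurable fun c => f c a) :
    Measurable f := measurable_pi_lambda f hf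

lemma my_measurable_prod {α ι : Type*} {m : MeasurableSpace α} (s : Finset ι)
    (f : ι → α → ℝ) (hf : ∀ i ∈ s, Measurable (f i)) :
    Measurable fun a => ∏ i ∈ s, f i a := Finset.measurable_prod s hf

lemma my_sm {α : Type*} {m : MeasurableSpace α} {f : α → ℝ} (hf : Measurable f) :
    StronglyMeasurable f := hf.stronglyMeasurable

lemma my_prod_mk {α β γ : Type*} {mα : MeasurableSpace α} [MeasurableSpace β]
    [MeasurableSpace γ] {f : α → β} {g : α → γ} (hf : Measurable f) (hg : Measurable g) :
    Measurable fun a => (f a, g a) := hf.prodMk hg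

/-- Auxiliary σ-algebras. -/
def m2aux {Ω 𝔛 : Type*} [MeasurableSpace 𝔛] (X : ℕ → Ω → ℝ) (T : ℕ → Ω → 𝔛) :
    MeasurableSpace Ω :=
  MeasurableSpace.comap (fun ω => ((fun j => stick X j ω), (fun j => T j ω))) inferInstance

noncomputable def m1aux {Ω 𝔛 : Type*} [MeasurableSpace 𝔛] (X : ℕ → Ω → ℝ) (T : ℕ → Ω → 𝔛) :
    MeasurableSpace Ω :=
  MeasurableSpace.comap (fun ω => ((fun z : 𝔛 => nuSB X T {z} ω), T 0 ω)) inferInstance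

theorem core_stmt2
    {𝔛 Ω : Type*} [Countable 𝔛] [DecidableEq 𝔛] [MeasurableSpace 𝔛] [DiscreteMeasurableSpace 𝔛]
    {mΩ : MeasurableSpace Ω} (Pr : Measure Ω) [IsProbabilityMeasure Pr]
    (X : ℕ → Ω → ℝ) (hXmeas : ∀ j, Measurable (X j))
    (hGood : ∀ᵐ ω ∂Pr, ∀ j : ℕ, X j ω ∈ Set.Icc (0:ℝ) 1)
    (T : ℕ → Ω → 𝔛) (hTmeas : ∀ j, Measurable (T j))
    (n : ℕ) (J : Fin n → Ω → ℕ) (hJmeas : ∀ i, Measurable (J i))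
    (hJ : ∀ jv : Fin n → ℕ, ∀ᵐ ω ∂Pr,
      (Pr[Set.indicator {ω' | ∀ i, J i ω' = jv i} (fun _ => (1:ℝ)) | m2aux X T]) ω
        = ∏ i, stick X (jv i) ω) :
    ∀ᵐ ω ∂Pr, ∀ y : Fin n → 𝔛,
      (Pr[Set.indicator {ω' | ∀ i, T (J i ω') ω' = y i} (fun _ => (1:ℝ)) | m1aux X T]) ω
        = ∏ i, nuSB X T {y i} ω := by
  classical
  -- basic measurability
  have hstick_meas : ∀ j, Measurable (stick X j) := by
    intro j
    exact (hXmeas j).mul (Finset.measurable_prod _ fun i _ => measurable_const.sub (hXmeas i))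
  have hF2 : Measurable (fun ω => ((fun j => stick X j ω), (fun j => T j ω)) :
      Ω → (ℕ → ℝ) × (ℕ → 𝔛)) :=
    my_prod_mk (my_measurable_pi _ fun j => hstick_meas j)
      (my_measurable_pi _ fun j => hTmeas j)
  have hm2le : m2aux X T ≤ mΩ := hF2.comap_le
  have hF2m2 : Measurable[m2aux X T] (fun ω => ((fun j => stick X j ω), (fun j => T j ω)) :
      Ω → (ℕ → ℝ) × (ℕ → 𝔛)) :=
    Measurable.of_comap_le le_rfl
  have hstick_m2 : ∀ j, Measurable[m2aux X T] (stick X j) :=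
    fun j => ((measurable_pi_apply j).comp (measurable_fst.comp hF2m2) : _)
  have hT_m2 : ∀ j, Measurable[m2aux X T] (T j) :=
    fun j => ((measurable_pi_apply j).comp (measurable_snd.comp hF2m2) : _)
  have hnu_m2 : ∀ z : 𝔛, Measurable[m2aux X T] (fun ω => nuSB X T {z} ω) := by
    intro z
    have h : (fun ω => nuSB X T {z} ω) =
        fun ω => ∑' j, stick X j ω * Set.indicator {z} (fun _ => (1:ℝ)) (T j ω) := rfl
    rw [h]
    exact measurable_tsum_real (m' := m2aux X T) _ fun j =>
      (hstick_m2 j).mul ((Measurable.of_discrete (f := Set.indicator {z} (fun _ => (1:ℝ)))).comp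
        (hT_m2 j))
  have hF1m2 : Measurable[m2aux X T] (fun ω => ((fun z : 𝔛 => nuSB X T {z} ω), T 0 ω) :
      Ω → (𝔛 → ℝ) × 𝔛) :=
    my_prod_mk (my_measurable_pi _ fun z => hnu_m2 z) (hT_m2 0)
  have hm1le2 : m1aux X T ≤ m2aux X T := hF1m2.comap_le
  have hm1le : m1aux X T ≤ mΩ := hm1le2.trans hm2le
  have hF1m1 : Measurable[m1aux X T] (fun ω => ((fun z : 𝔛 => nuSB X T {z} ω), T 0 ω) :
      Ω → (𝔛 → ℝ) × 𝔛) :=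
    Measurable.of_comap_le le_rfl
  have hnu_m1 : ∀ z : 𝔛, Measurable[m1aux X T] (fun ω => nuSB X T {z} ω) :=
    fun z => ((measurable_pi_apply z).comp (measurable_fst.comp hF1m1) : _)
  haveI hsf2 : SigmaFinite (Pr.trim hm2le) := by infer_instance
  haveI hsf1 : SigmaFinite (Pr.trim hm1le) := by infer_instance
  -- pointwise facts on the good set
  have hpartial : ∀ ω, (∀ j, X j ω ∈ Set.Icc (0:ℝ) 1) → ∀ N : ℕ,
      ∑ j ∈ Finset.range N, stick X j ω = 1 - ∏ i ∈ Finset.range N, (1 - X i ω) := by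
    intro ω hω N
    induction N with
    | zero => simp
    | succ N ih =>
        rw [Finset.sum_range_succ, Finset.prod_range_succ, ih]
        show _ + stick X N ω = _
        rw [stick]
        ring
  have hstick01 : ∀ ω, (∀ j, X j ω ∈ Set.Icc (0:ℝ) 1) → ∀ j,
      stick X j ω ∈ Set.Icc (0:ℝ) 1 := by
    intro ω hω j
    have hnn : ∀ i, (0:ℝ) ≤ 1 - X i ω := fun i => by linarith [(hω i).2]
    constructor
    · exact mul_nonneg (hω j).1 (Finset.prod_nonneg fun i _ => hnn i)
    · have h1 : ∏ i ∈ Finset.range j, (1 - X i ω) ≤ 1 :=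
        Finset.prod_le_one (fun i _ => hnn i) (fun i _ => by linarith [(hω i).1])
      have := mul_le_one₀ (hω j).2 (Finset.prod_nonneg fun i _ => hnn i) h1
      exact this
  have hsumm : ∀ ω, (∀ j, X j ω ∈ Set.Icc (0:ℝ) 1) → Summable (fun j => stick X j ω) := by
    intro ω hω
    refine summable_of_sum_range_le (c := 1) (fun j => (hstick01 ω hω j).1) fun N => ?_
    rw [hpartial ω hω N]
    have : (0:ℝ) ≤ ∏ i ∈ Finset.range N, (1 - X i ω) :=
      Finset.prod_nonneg fun i _ => by linarith [(hω i).2]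
    linarith
  have htsum_le : ∀ ω, (∀ j, X j ω ∈ Set.Icc (0:ℝ) 1) → ∑' j, stick X j ω ≤ 1 := by
    intro ω hω
    refine Real.tsum_le_of_sum_range_le (fun j => (hstick01 ω hω j).1) fun N => ?_
    rw [hpartial ω hω N]
    have : (0:ℝ) ≤ ∏ i ∈ Finset.range N, (1 - X i ω) :=
      Finset.prod_nonneg fun i _ => by linarith [(hω i).2]
    linarith
  have hind01 : ∀ (z : 𝔛) (x : 𝔛), Set.indicator {z} (fun _ => (1:ℝ)) x ∈ Set.Icc (0:ℝ) 1 := by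
    intro z x
    by_cases h : x ∈ ({z} : Set 𝔛)
    · rw [Set.indicator_of_mem h]; exact ⟨zero_le_one, le_refl 1⟩
    · rw [Set.indicator_of_notMem h]; exact ⟨le_refl 0, zero_le_one⟩
  have hnu_pt : ∀ ω, (∀ j, X j ω ∈ Set.Icc (0:ℝ) 1) → ∀ z : 𝔛,
      HasSum (fun j => stick X j ω * Set.indicator {z} (fun _ => (1:ℝ)) (T j ω))
        (nuSB X T {z} ω) ∧ nuSB X T {z} ω ∈ Set.Icc (0:ℝ) 1 := by
    intro ω hω z
    have hle : ∀ j, stick X j ω * Set.indicator {z} (fun _ => (1:ℝ)) (T j ω) ≤ stick X j ω :=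
      fun j => mul_le_of_le_one_right (hstick01 ω hω j).1 (hind01 z (T j ω)).2
    have hnn : ∀ j, 0 ≤ stick X j ω * Set.indicator {z} (fun _ => (1:ℝ)) (T j ω) :=
      fun j => mul_nonneg (hstick01 ω hω j).1 (hind01 z (T j ω)).1
    have hsz : Summable (fun j => stick X j ω * Set.indicator {z} (fun _ => (1:ℝ)) (T j ω)) :=
      Summable.of_nonneg_of_le hnn hle (hsumm ω hω)
    refine ⟨hsz.hasSum, tsum_nonneg hnn, ?_⟩
    exact le_trans (Summable.tsum_le_tsum hle hsz (hsumm ω hω)) (htsum_le ω hω)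
  rw [ae_all_iff]
  intro y
  -- notation for this y
  set A : Set Ω := {ω' | ∀ i, T (J i ω') ω' = y i} with hAdef
  set B : (Fin n → ℕ) → Set Ω := fun jv => {ω' | ∀ i, J i ω' = jv i} with hBdef
  set C : (Fin n → ℕ) → Set Ω := fun jv => {ω | ∀ i, T (jv i) ω = y i} with hCdef
  set g : Ω → ℝ := fun ω => ∏ i, nuSB X T {y i} ω with hgdef
  set k : (Fin n → ℕ) → Ω → ℝ := fun jv ω =>
    ∏ i, (stick X (jv i) ω * Set.indicator {y i} (fun _ => (1:ℝ)) (T (jv i) ω)) with hkdef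
  -- measurability of the sets
  have hC_m2 : ∀ jv, MeasurableSet[m2aux X T] (C jv) := by
    intro jv
    have h : C jv = ⋂ i, (T (jv i)) ⁻¹' {y i} := by
      ext ω; simp [hCdef, Set.mem_iInter]
    rw [h]
    exact MeasurableSet.iInter fun i =>
      hT_m2 (jv i) (DiscreteMeasurableSpace.forall_measurableSet _)
  have hC_meas : ∀ jv, MeasurableSet[mΩ] (C jv) := fun jv => hm2le _ (hC_m2 jv)
  have hB_meas : ∀ jv, MeasurableSet[mΩ] (B jv) := by
    intro jv
    have h : B jv = ⋂ i, (J i) ⁻¹' {jv i} := by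
      ext ω; simp [hBdef, Set.mem_iInter]
    rw [h]
    exact MeasurableSet.iInter fun i => hJmeas i (measurableSet_singleton _)
  have hB_disj : Pairwise (Function.onFun Disjoint B) := by
    intro jv jv' hne
    rw [Function.onFun, Set.disjoint_left]
    intro ω hω hω'
    exact hne (funext fun i => (hω i).symm.trans (hω' i))
  have hA_eq : A = ⋃ jv, B jv ∩ C jv := by
    ext ω
    constructor
    · intro h
      exact Set.mem_iUnion.mpr ⟨fun i => J i ω, fun i => rfl, fun i => h i⟩
    · intro h
      obtain ⟨jv, hB1, hC1⟩ := Set.mem_iUnion.mp h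
      intro i
      have := hC1 i
      rwa [← hB1 i] at this
  have hA_meas : MeasurableSet[mΩ] A := by
    rw [hA_eq]
    exact MeasurableSet.iUnion fun jv => (hB_meas jv).inter (hC_meas jv)
  have hfy_int : Integrable (Set.indicator A fun _ => (1:ℝ)) Pr :=
    (integrable_const (1:ℝ)).indicator hA_meas
  -- measurability and integrability of g and k
  have hg_m2 : Measurable[m2aux X T] g :=
    my_measurable_prod Finset.univ _ fun i _ => hnu_m2 (y i)
  have hg_m1 : Measurable[m1aux X T] g :=
    my_measurable_prod Finset.univ _ fun i _ => hnu_m1 (y i)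
  have hg_meas : Measurable[mΩ] g := hg_m1.mono hm1le le_rfl
  have hg_bd : ∀ᵐ ω ∂Pr, ‖g ω‖ ≤ 1 := by
    filter_upwards [hGood] with ω hω
    rw [hgdef, Real.norm_eq_abs,
      abs_of_nonneg (Finset.prod_nonneg fun i _ => ((hnu_pt ω hω (y i)).2).1)]
    exact Finset.prod_le_one (fun i _ => ((hnu_pt ω hω (y i)).2).1)
      (fun i _ => ((hnu_pt ω hω (y i)).2).2)
  have hg_int : Integrable g Pr :=
    Integrable.mono' (integrable_const (1:ℝ)) hg_meas.aestronglyMeasurable hg_bd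
  have hk_meas : ∀ jv, Measurable[mΩ] (k jv) := by
    intro jv
    refine my_measurable_prod Finset.univ _ fun i _ => (hstick_meas (jv i)).mul ?_
    exact (Measurable.of_discrete (f := Set.indicator {y i} (fun _ => (1:ℝ)))).comp
      (hTmeas (jv i))
  have hk_bd : ∀ jv, ∀ᵐ ω ∂Pr, ‖k jv ω‖ ≤ 1 := by
    intro jv
    filter_upwards [hGood] with ω hω
    have h01 : ∀ i : Fin n,
        stick X (jv i) ω * Set.indicator {y i} (fun _ => (1:ℝ)) (T (jv i) ω) ∈ Set.Icc (0:ℝ) 1 := by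
      intro i
      constructor
      · exact mul_nonneg (hstick01 ω hω (jv i)).1 (hind01 (y i) (T (jv i) ω)).1
      · exact mul_le_one₀ (hstick01 ω hω (jv i)).2 (hind01 (y i) (T (jv i) ω)).1
          (hind01 (y i) (T (jv i) ω)).2
    rw [hkdef, Real.norm_eq_abs,
      abs_of_nonneg (Finset.prod_nonneg fun i _ => (h01 i).1)]
    exact Finset.prod_le_one (fun i _ => (h01 i).1) (fun i _ => (h01 i).2)
  have hk_int : ∀ jv, Integrable (k jv) Pr := fun jv =>
    Integrable.mono' (integrable_const (1:ℝ)) (hk_meas jv).aestronglyMeasurable (hk_bd jv)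
  have hk_nonneg : ∀ jv, 0 ≤ᵐ[Pr] k jv := by
    intro jv
    filter_upwards [hGood] with ω hω
    exact Finset.prod_nonneg fun i _ =>
      mul_nonneg (hstick01 ω hω (jv i)).1 (hind01 (y i) (T (jv i) ω)).1
  -- indicator form of k
  have hk_eq : ∀ jv, k jv = fun ω =>
      Set.indicator (C jv) (fun ω' => ∏ i, stick X (jv i) ω') ω := by
    intro jv
    funext ω
    rw [hkdef]
    simp only
    rw [Finset.prod_mul_distrib]
    by_cases h : ω ∈ C jv
    · rw [Set.indicator_of_mem h]
      have hall : ∀ i : Fin n, Set.indicator {y i} (fun _ => (1:ℝ)) (T (jv i) ω) = 1 := by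
        intro i
        rw [Set.indicator_of_mem (Set.mem_singleton_iff.mpr (h i))]
      rw [Finset.prod_congr rfl fun i _ => hall i, Finset.prod_const_one, mul_one]
    · rw [Set.indicator_of_notMem h]
      obtain ⟨i₀, hi₀⟩ := not_forall.mp h
      have : Set.indicator {y i₀} (fun _ => (1:ℝ)) (T (jv i₀) ω) = 0 :=
        Set.indicator_of_notMem (fun hc => hi₀ (Set.mem_singleton_iff.mp hc)) _
      rw [Finset.prod_eq_zero (f := fun i => Set.indicator {y i} (fun _ => (1:ℝ)) (T (jv i) ω))
        (Finset.mem_univ i₀) this, mul_zero]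
  -- key integral identity per jv on m2-measurable sets
  have hB_int : ∀ jv, Integrable (Set.indicator (B jv) fun _ => (1:ℝ)) Pr :=
    fun jv => (integrable_const (1:ℝ)).indicator (hB_meas jv)
  have hkey : ∀ (s : Set Ω), MeasurableSet[m2aux X T] s → ∀ jv,
      ∫ ω in s, k jv ω ∂Pr = (Pr (B jv ∩ C jv ∩ s)).toReal := by
    intro s hs jv
    have h1 : ∫ ω in s, k jv ω ∂Pr
        = ∫ ω in s, Set.indicator (C jv) (fun ω' => ∏ i, stick X (jv i) ω') ω ∂Pr := by
      rw [hk_eq jv]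
    have h2 : ∫ ω in s, Set.indicator (C jv) (fun ω' => ∏ i, stick X (jv i) ω') ω ∂Pr
        = ∫ ω in s ∩ C jv, ∏ i, stick X (jv i) ω ∂Pr := setIntegral_indicator (hC_meas jv)
    have h3 : ∫ ω in s ∩ C jv, ∏ i, stick X (jv i) ω ∂Pr
        = ∫ ω in s ∩ C jv, (Pr[Set.indicator (B jv) (fun _ => (1:ℝ)) | m2aux X T]) ω ∂Pr := by
      refine integral_congr_ae (ae_restrict_of_ae ?_)
      exact (hJ jv).mono fun ω hω => hω.symm
    have h4 : ∫ ω in s ∩ C jv, (Pr[Set.indicator (B jv) (fun _ => (1:ℝ)) | m2aux X T]) ω ∂Pr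
        = ∫ ω in s ∩ C jv, Set.indicator (B jv) (fun _ => (1:ℝ)) ω ∂Pr :=
      setIntegral_condExp hm2le (hB_int jv) (hs.inter (hC_m2 jv))
    have h5 : ∫ ω in s ∩ C jv, Set.indicator (B jv) (fun _ => (1:ℝ)) ω ∂Pr
        = ∫ _ω in (s ∩ C jv) ∩ B jv, (1:ℝ) ∂Pr := setIntegral_indicator (hB_meas jv)
    have h6 : ∫ _ω in (s ∩ C jv) ∩ B jv, (1:ℝ) ∂Pr = (Pr ((s ∩ C jv) ∩ B jv)).toReal := by
      rw [setIntegral_const, smul_eq_mul, mul_one]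
      rfl
    have h7 : (s ∩ C jv) ∩ B jv = B jv ∩ C jv ∩ s := by
      ext ω; simp only [Set.mem_inter_iff]; tauto
    rw [h1, h2, h3, h4, h5, h6, h7]
  have hmeasA : ∀ (s : Set Ω), MeasurableSet[mΩ] s →
      Pr (A ∩ s) = ∑' jv, Pr (B jv ∩ C jv ∩ s) := by
    intro s hs
    rw [hA_eq, Set.iUnion_inter]
    refine measure_iUnion ?_ fun jv => ((hB_meas jv).inter (hC_meas jv)).inter hs
    intro jv jv' hne
    exact Disjoint.mono (Set.inter_subset_left.trans Set.inter_subset_left)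
      (Set.inter_subset_left.trans Set.inter_subset_left) (hB_disj hne)
  have hset_eq : ∀ s : Set Ω, MeasurableSet[m2aux X T] s → Pr s < ⊤ →
      ∫ ω in s, g ω ∂Pr = ∫ ω in s, Set.indicator A (fun _ => (1:ℝ)) ω ∂Pr := by
    intro s hs _
    have hsΩ : MeasurableSet[mΩ] s := hm2le _ hs
    have hrhs : ∫ ω in s, Set.indicator A (fun _ => (1:ℝ)) ω ∂Pr = (Pr (A ∩ s)).toReal := by
      rw [setIntegral_indicator hA_meas, setIntegral_const, smul_eq_mul, mul_one,
        Set.inter_comm]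
      rfl
    have hgk : ∀ᵐ ω ∂Pr, g ω = ∑' jv, k jv ω := by
      filter_upwards [hGood] with ω hω
      have h := hasSum_pi_prod
        (fun i jj => stick X jj ω * Set.indicator {y i} (fun _ => (1:ℝ)) (T jj ω))
        (fun i => nuSB X T {y i} ω)
        (fun i => (hnu_pt ω hω (y i)).1)
        (fun i jj => mul_nonneg (hstick01 ω hω jj).1 (hind01 (y i) (T jj ω)).1)
      exact h.tsum_eq.symm
    have hlint : ∀ jv, ∫⁻ ω in s, ‖k jv ω‖₊ ∂Pr = ENNReal.ofReal (∫ ω in s, k jv ω ∂Pr) := by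
      intro jv
      simp only [← enorm_eq_nnnorm]
      rw [← ofReal_integral_norm_eq_lintegral_enorm ((hk_int jv).integrableOn)]
      congr 1
      refine integral_congr_ae (ae_restrict_of_ae ?_)
      filter_upwards [hk_nonneg jv] with ω hω
      rw [Real.norm_eq_abs, abs_of_nonneg hω]
    have hlint_sum : ∑' jv, ∫⁻ ω in s, ‖k jv ω‖₊ ∂Pr ≠ ⊤ := by
      have heq : ∀ jv, ∫⁻ ω in s, ‖k jv ω‖₊ ∂Pr = Pr (B jv ∩ C jv ∩ s) := by
        intro jv
        rw [hlint jv, hkey s hs jv, ENNReal.ofReal_toReal (measure_ne_top Pr _)]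
      rw [tsum_congr heq, ← hmeasA s hsΩ]
      exact measure_ne_top Pr _
    calc ∫ ω in s, g ω ∂Pr = ∫ ω in s, ∑' jv, k jv ω ∂Pr :=
          integral_congr_ae (ae_restrict_of_ae hgk)
      _ = ∑' jv, ∫ ω in s, k jv ω ∂Pr :=
          integral_tsum (fun jv => ((hk_meas jv).aestronglyMeasurable).restrict) hlint_sum
      _ = ∑' jv, (Pr (B jv ∩ C jv ∩ s)).toReal := tsum_congr fun jv => hkey s hs jv
      _ = (∑' jv, Pr (B jv ∩ C jv ∩ s)).toReal :=
          (ENNReal.tsum_toReal_eq fun jv => measure_ne_top Pr _).symm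
      _ = (Pr (A ∩ s)).toReal := by rw [← hmeasA s hsΩ]
      _ = ∫ ω in s, Set.indicator A (fun _ => (1:ℝ)) ω ∂Pr := hrhs.symm
  -- assemble via the tower property
  have hcond2 : g =ᵐ[Pr] Pr[Set.indicator A (fun _ => (1:ℝ)) | m2aux X T] :=
    ae_eq_condExp_of_forall_setIntegral_eq hm2le hfy_int
      (fun s _ _ => hg_int.integrableOn) hset_eq
      ⟨g, my_sm hg_m2, Filter.EventuallyEq.rfl⟩
  have h1 := condExp_condExp_of_le (μ := Pr) (f := Set.indicator A fun _ => (1:ℝ))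
    hm1le2 hm2le
  have h2 : Pr[Pr[Set.indicator A (fun _ => (1:ℝ)) | m2aux X T] | m1aux X T]
      =ᵐ[Pr] Pr[g | m1aux X T] := condExp_congr_ae hcond2.symm
  have h3 : Pr[g | m1aux X T] = g :=
    condExp_of_stronglyMeasurable hm1le (my_sm hg_m1) hg_int
  have h4 : Pr[g | m1aux X T] =ᵐ[Pr] g := by rw [h3]
  have hfinal : Pr[Set.indicator A (fun _ => (1:ℝ)) | m1aux X T] =ᵐ[Pr] g :=
    (h1.symm.trans h2).trans h4
  filter_upwards [hfinal] with ω hω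
  exact hω


/-- Proposition 3.3: given (ν, T₁), the variables Yᵢ = T_{Jᵢ} are i.i.d. with law ν. -/
theorem stmt2
    {𝔛 Ω : Type*} [Countable 𝔛] [DecidableEq 𝔛] [MeasurableSpace 𝔛] [DiscreteMeasurableSpace 𝔛]
    [MeasurableSpace Ω] (Pr : Measure Ω) [IsProbabilityMeasure Pr]
    -- an irreducible positive recurrent generator G on 𝔛 with stationary distribution μ
    (G : 𝔛 → 𝔛 → ℝ) (θ : ℝ) (hθpos : 0 < θ) (hθG : ∀ x, |G x x| ≤ θ)
    (hGoff : ∀ x y, x ≠ y → 0 ≤ G x y)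
    (hGrow : ∀ x, HasSum (fun y => if y = x then (0:ℝ) else G x y) (-G x x))
    (Q : 𝔛 → 𝔛 → ℝ) (hQdef : ∀ x y, Q x y = (if x = y then 1 else 0) + G x y / θ)
    (hirr : ∀ x y, ∃ m : ℕ, ∃ t : Fin (m + 2) → 𝔛, t 0 = x ∧ t (Fin.last (m + 1)) = y ∧
      0 < ∏ i : Fin (m + 1), Q (t i.castSucc) (t i.succ))
    -- positive recurrence: Q admits a stationary probability distribution μ
    (μ : 𝔛 → ℝ) (hμ0 : ∀ x, 0 ≤ μ x) (hμ1 : HasSum μ 1)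
    (hμQ : ∀ y, HasSum (fun x => μ x * Q x y) (μ y))
    -- the GEM(θ) ingredients: i.i.d. Beta(1,θ) variables X
    (X : ℕ → Ω → ℝ) (hXmeas : ∀ j, Measurable (X j))
    (hXiid : iIndepFun X Pr)
    (hXlaw : ∀ j, Measure.map (X j) Pr = beta1 θ)
    -- the stationary Markov chain T with kernel Q and initial law μ
    (T : ℕ → Ω → 𝔛) (hTmeas : ∀ j, Measurable (T j))
    (hTlaw : ∀ (m : ℕ) (t : Fin (m + 1) → 𝔛),
      Pr {ω | ∀ i : Fin (m + 1), T i ω = t i} =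
        ENNReal.ofReal (μ (t 0) * ∏ i : Fin m, Q (t i.castSucc) (t i.succ)))
    -- independence of the GEM sticks and the chain
    (hindep : IndepFun (fun ω j => X j ω) (fun ω j => T j ω) Pr)
    -- the sampling indices J
    (n : ℕ) (hn : 1 ≤ n) (J : Fin n → Ω → ℕ) (hJmeas : ∀ i, Measurable (J i))
    (hJ : ∀ jv : Fin n → ℕ, ∀ᵐ ω ∂Pr,
      (Pr[Set.indicator {ω' | ∀ i, J i ω' = jv i} (fun _ => (1:ℝ)) |
        MeasurableSpace.comap
          (fun ω => ((fun j => stick X j ω), (fun j => T j ω))) inferInstance]) ω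
        = ∏ i, stick X (jv i) ω) :
    ∀ᵐ ω ∂Pr, ∀ y : Fin n → 𝔛,
      (Pr[Set.indicator {ω' | ∀ i, T (J i ω') ω' = y i} (fun _ => (1:ℝ)) |
        MeasurableSpace.comap
          (fun ω => ((fun z : 𝔛 => nuSB X T {z} ω), T 0 ω)) inferInstance]) ω
        = ∏ i, nuSB X T {y i} ω := by
  classical
  have hGood : ∀ᵐ ω ∂Pr, ∀ j : ℕ, X j ω ∈ Set.Icc (0:ℝ) 1 := by
    rw [ae_all_iff]
    intro j
    have hmap : Pr (X j ⁻¹' (Set.Icc (0:ℝ) 1)ᶜ) = beta1 θ ((Set.Icc (0:ℝ) 1)ᶜ) := by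
      rw [← hXlaw j, Measure.map_apply (hXmeas j) measurableSet_Icc.compl]
    have hbeta : beta1 θ ((Set.Icc (0:ℝ) 1)ᶜ) = 0 := by
      rw [beta1, withDensity_apply _ measurableSet_Icc.compl,
        Measure.restrict_restrict measurableSet_Icc.compl, Set.compl_inter_self,
        Measure.restrict_empty, lintegral_zero_measure]
    have : Pr {ω | ¬ X j ω ∈ Set.Icc (0:ℝ) 1} = 0 := by
      have hpre : {ω | ¬ X j ω ∈ Set.Icc (0:ℝ) 1} = X j ⁻¹' (Set.Icc (0:ℝ) 1)ᶜ := rfl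
      rw [hpre, hmap, hbeta]
    exact ae_iff.mpr this
  exact core_stmt2 Pr X hXmeas hGood T hTmeas n J hJmeas hJ
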